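/- For every cycle C of the permutation π there is exactly one element i ∈ C from which a best staircase exists. -/

import Mathlib

attribute [local instance] Classical.propDecidable

variable {n : ℕ}

/-- The first element of `E` encountered strictly after `x` when following `π` along its cycle
(`x` itself if no element of `E` is reachable).  For `E = E_r` this is the map `π_r`. -/
noncomputable def nextIn (π : Equiv.Perm (Fin n)) (E : Finset (Fin n)) (x : Fin n) : Fin n :=
  if h : ∃ k, 0 < k ∧ (⇑π)^[k] x ∈ E then (⇑π)^[Nat.find h] x else x

/-- `b`-fold iteration of `nextIn`; for `E = E_r` this is `π_r^b`. -/
noncomputable def stepB (π : Equiv.Perm (Fin n)) (b : ℕ) (E : Finset (Fin n)) (x : Fin n) :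
    Fin n :=
  (nextIn π E)^[b] x

/-- `level π b r` is the set `E_{r+1}` (0-indexed): `level π b 0 = E_1 = [n]`, and `E_{r+1}`
consists of the elements `i` of `E_r` with `i < π_r^k(i)` for all `k ∈ {−b,…,b} \ {0}`. -/
noncomputable def level (π : Equiv.Perm (Fin n)) (b : ℕ) : ℕ → Finset (Fin n)
  | 0 => Finset.univ
  | r + 1 =>
    (level π b r).filter fun i =>
      (∀ k ∈ Finset.Icc 1 b, i < (nextIn π (level π b r))^[k] i) ∧
      (∀ k ∈ Finset.Icc 1 b, i < (nextIn π⁻¹ (level π b r))^[k] i)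

/-- The cycle of `π` containing `x`, as a finset. -/
def cycleOfF (π : Equiv.Perm (Fin n)) (x : Fin n) : Finset (Fin n) :=
  (Finset.range n).image fun k => (⇑π)^[k] x

/-- `iSeq π b i k` is the element `i_{k+1}` of the `b`-staircase from `i`:
`i_1 = i` and `i_{k+1} = π_k^b(i_k)`. -/
noncomputable def iSeq (π : Equiv.Perm (Fin n)) (b : ℕ) (i : Fin n) : ℕ → Fin n
  | 0 => i
  | k + 1 => stepB π b (level π b k) (iSeq π b i k)

/-- `jSeq π b r m q` is the element `j_{r+1-q}` of the descending part of the `b`-staircase of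
size `r` with middle `m`: `j_{r+1} = m` and `j_k = π_k^b(j_{k+1})`. -/
noncomputable def jSeq (π : Equiv.Perm (Fin n)) (b : ℕ) (r : ℕ) (m : Fin n) : ℕ → Fin n
  | 0 => m
  | q + 1 => stepB π b (level π b (r - (q + 1))) (jSeq π b r m q)

/-- The sequence `(i = i_1, …, i_{r+1} = m = j_{r+1}, j_r, …, j_1 = i')` is a `b`-staircase of
size `r` from `i`: `i_k, j_k ∈ E_k` for all `k ∈ [r+1]`. -/
def IsStaircase (π : Equiv.Perm (Fin n)) (b r : ℕ) (i : Fin n) : Prop :=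
  ∀ k ≤ r, iSeq π b i k ∈ level π b k ∧
    jSeq π b r (iSeq π b i r) k ∈ level π b (r - k)

/-- An almost `b`-staircase of size `r` from `i`: membership `i_k, j_k ∈ E_k` is required only
for `k ∈ [r]`. -/
def IsAlmost (π : Equiv.Perm (Fin n)) (b r : ℕ) (i : Fin n) : Prop :=
  (∀ k < r, iSeq π b i k ∈ level π b k) ∧
  (∀ q, 1 ≤ q → q ≤ r → jSeq π b r (iSeq π b i r) q ∈ level π b (r - q))

/-- The `b`-staircase of size `r` from `i` is the best `b`-staircase from `i`: there is no
proper (i.e. with `|E_{r+1} ∩ C| > b`, where `C` is the cycle of `i`) almost `b`-staircase of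
size `r+1` from `i`. -/
def IsBest (π : Equiv.Perm (Fin n)) (b r : ℕ) (i : Fin n) : Prop :=
  IsStaircase π b r i ∧
    ¬ (IsAlmost π b (r + 1) i ∧ b < ((level π b r) ∩ cycleOfF π i).card)

/-- Fich et al.'s (`b = 1`) notion: the staircase of size `r` from `i` is the best staircase
from `i`, where an almost staircase of size `r+1` is proper iff `i_{r+1} ≠ m'` (its middle). -/
def IsBest1 (π : Equiv.Perm (Fin n)) (r : ℕ) (i : Fin n) : Prop :=
  IsStaircase π 1 r i ∧
    ¬ (IsAlmost π 1 (r + 1) i ∧ iSeq π 1 i r ≠ iSeq π 1 i (r + 1))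


lemma nextIn_def_pos {σ : Equiv.Perm (Fin n)} {E : Finset (Fin n)} {y : Fin n}
    (h : ∃ k, 0 < k ∧ (⇑σ)^[k] y ∈ E) : nextIn σ E y = (⇑σ)^[Nat.find h] y := by
  rw [nextIn, dif_pos h]

lemma exists_hit {σ : Equiv.Perm (Fin n)} {E : Finset (Fin n)} {y z : Fin n}
    (hz : z ∈ E) (hc : σ.SameCycle y z) : ∃ k, 0 < k ∧ (⇑σ)^[k] y ∈ E := by
  obtain ⟨i, hi0, _, hiy⟩ := hc.exists_pow_eq''
  exact ⟨i, hi0, by rw [Equiv.Perm.iterate_eq_pow, hiy]; exact hz⟩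

lemma nextIn_mem {σ : Equiv.Perm (Fin n)} {E : Finset (Fin n)} {y z : Fin n}
    (hz : z ∈ E) (hc : σ.SameCycle y z) : nextIn σ E y ∈ E := by
  have h := exists_hit hz hc
  rw [nextIn_def_pos h]
  exact (Nat.find_spec h).2

lemma sameCycle_nextIn (σ : Equiv.Perm (Fin n)) (E : Finset (Fin n)) (y : Fin n) :
    σ.SameCycle y (nextIn σ E y) := by
  rw [nextIn]
  split
  · exact ⟨Nat.find ‹_›, by rw [zpow_natCast, ← Equiv.Perm.iterate_eq_pow]⟩
  · exact Equiv.Perm.SameCycle.refl σ y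

lemma eq_of_nextIn_eq_self {σ : Equiv.Perm (Fin n)} {E : Finset (Fin n)} {y z : Fin n}
    (hy : nextIn σ E y = y) (hz : z ∈ E) (hc : σ.SameCycle y z) : z = y := by
  have h := exists_hit hz hc
  rw [nextIn_def_pos h] at hy
  have hk0 : 0 < Nat.find h := (Nat.find_spec h).1
  have hper : Function.IsPeriodicPt ⇑σ (Nat.find h) y := hy
  have hple : Function.minimalPeriod ⇑σ y ≤ Nat.find h := hper.minimalPeriod_le hk0
  have hp0 : 0 < Function.minimalPeriod ⇑σ y := hper.minimalPeriod_pos hk0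
  obtain ⟨j, hj0, _, hjy⟩ := hc.exists_pow_eq''
  have hjy' : (⇑σ)^[j % Function.minimalPeriod ⇑σ y] y = z := by
    rw [Function.iterate_mod_minimalPeriod_eq, Equiv.Perm.iterate_eq_pow, hjy]
  by_cases hj' : j % Function.minimalPeriod ⇑σ y = 0
  · rw [hj'] at hjy'; exact hjy'.symm
  · exfalso
    have hle := Nat.find_min' h ⟨Nat.pos_of_ne_zero hj', by rw [hjy']; exact hz⟩
    have := Nat.mod_lt j hp0
    omega

lemma nextIn_inv_nextIn {σ : Equiv.Perm (Fin n)} {E : Finset (Fin n)} {z : Fin n}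
    (hz : z ∈ E) : nextIn σ⁻¹ E (nextIn σ E z) = z := by
  have h : ∃ k, 0 < k ∧ (⇑σ)^[k] z ∈ E := by
    refine ⟨orderOf σ, orderOf_pos σ, ?_⟩
    rw [Equiv.Perm.iterate_eq_pow, pow_orderOf_eq_one]
    exact hz
  set k := Nat.find h with hkdef
  have hk0 : 0 < k := (Nat.find_spec h).1
  have key : ∀ j ≤ k, (⇑σ⁻¹)^[j] ((⇑σ)^[k] z) = (⇑σ)^[k - j] z := by
    intro j hj
    have h1 : (⇑σ)^[j] ((⇑σ)^[k - j] z) = (⇑σ)^[k] z := by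
      rw [← Function.iterate_add_apply]; congr 1; omega
    rw [← h1, Equiv.Perm.iterate_eq_pow, Equiv.Perm.iterate_eq_pow σ j, inv_pow]
    exact Equiv.symm_apply_apply (σ ^ j) _
  have h' : ∃ j, 0 < j ∧ (⇑σ⁻¹)^[j] ((⇑σ)^[k] z) ∈ E := by
    refine ⟨k, hk0, ?_⟩
    rw [key k le_rfl, Nat.sub_self]
    exact hz
  rw [nextIn_def_pos h, nextIn_def_pos h']
  have hle : Nat.find h' ≤ k := Nat.find_min' h' ⟨hk0, by rw [key k le_rfl, Nat.sub_self]; exact hz⟩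
  have heq : Nat.find h' = k := by
    by_contra hne
    have hlt : Nat.find h' < k := lt_of_le_of_ne hle hne
    have hmem : (⇑σ⁻¹)^[Nat.find h'] ((⇑σ)^[k] z) ∈ E := (Nat.find_spec h').2
    rw [key _ hle] at hmem
    exact Nat.find_min h (Nat.sub_lt hk0 (Nat.find_spec h').1) ⟨Nat.sub_pos_of_lt hlt, hmem⟩
  rw [heq, key k le_rfl, Nat.sub_self, Function.iterate_zero_apply]

lemma mem_cycleOfF {π : Equiv.Perm (Fin n)} {x y : Fin n} :
    y ∈ cycleOfF π x ↔ π.SameCycle x y := by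
  constructor
  · intro h
    simp only [cycleOfF, Finset.mem_image, Finset.mem_range] at h
    obtain ⟨k, _, rfl⟩ := h
    exact ⟨k, by rw [zpow_natCast, ← Equiv.Perm.iterate_eq_pow]⟩
  · intro h
    obtain ⟨i, hi0, _, hiy⟩ := h.exists_pow_eq''
    have hx : x ∈ Function.periodicPts ⇑π := by
      refine ⟨orderOf π, orderOf_pos π, ?_⟩
      show (⇑π)^[orderOf π] x = x
      rw [Equiv.Perm.iterate_eq_pow, pow_orderOf_eq_one]
      rfl
    have hp0 : 0 < Function.minimalPeriod ⇑π x :=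
      Function.minimalPeriod_pos_of_mem_periodicPts hx
    have hpn : Function.minimalPeriod ⇑π x ≤ n := by
      have hcard : ((Finset.range (Function.minimalPeriod ⇑π x)).image
          fun j => (⇑π)^[j] x).card = Function.minimalPeriod ⇑π x := by
        rw [Finset.card_image_of_injOn, Finset.card_range]
        intro a ha b hb hab
        exact Function.iterate_injOn_Iio_minimalPeriod (by simpa using ha) (by simpa using hb) hab
      calc Function.minimalPeriod ⇑π x = _ := hcard.symm
        _ ≤ (Finset.univ : Finset (Fin n)).card := Finset.card_le_card (Finset.subset_univ _)
        _ = n := by simp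
    simp only [cycleOfF, Finset.mem_image, Finset.mem_range]
    refine ⟨i % Function.minimalPeriod ⇑π x, lt_of_lt_of_le (Nat.mod_lt _ hp0) hpn, ?_⟩
    rw [Function.iterate_mod_minimalPeriod_eq, Equiv.Perm.iterate_eq_pow, hiy]

lemma level_succ_subset (π : Equiv.Perm (Fin n)) (b r : ℕ) :
    level π b (r + 1) ⊆ level π b r := by
  intro i hi
  simp only [level, Finset.mem_filter] at hi
  exact hi.1

lemma level_mono (π : Equiv.Perm (Fin n)) (b : ℕ) {r s : ℕ} (h : r ≤ s) :
    level π b s ⊆ level π b r := by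
  induction s with
  | zero => simp_all
  | succ s ih =>
    rcases Nat.lt_or_ge r (s+1) with h' | h'
    · exact (level_succ_subset π b s).trans (ih (by omega))
    · have : r = s + 1 := by omega
      subst this; rfl

lemma mem_level_succ {π : Equiv.Perm (Fin n)} {r : ℕ} {i : Fin n} :
    i ∈ level π 1 (r + 1) ↔ i ∈ level π 1 r ∧ i < nextIn π (level π 1 r) i ∧
      i < nextIn π⁻¹ (level π 1 r) i := by
  rw [level]
  simp [Finset.Icc_self, Finset.mem_filter, and_assoc]


lemma iSeq_succ (π : Equiv.Perm (Fin n)) (i : Fin n) (k : ℕ) :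
    iSeq π 1 i (k + 1) = nextIn π (level π 1 k) (iSeq π 1 i k) := by
  rw [iSeq, stepB, Function.iterate_one]

lemma jSeq_succ (π : Equiv.Perm (Fin n)) (r : ℕ) (m : Fin n) (q : ℕ) :
    jSeq π 1 r m (q + 1) = nextIn π (level π 1 (r - (q + 1))) (jSeq π 1 r m q) := by
  rw [jSeq, stepB, Function.iterate_one]

lemma iSeq_zero (π : Equiv.Perm (Fin n)) (b : ℕ) (i : Fin n) : iSeq π b i 0 = i := rfl

lemma jSeq_zero (π : Equiv.Perm (Fin n)) (b r : ℕ) (m : Fin n) : jSeq π b r m 0 = m := rfl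

lemma level_zero (π : Equiv.Perm (Fin n)) (b : ℕ) : level π b 0 = Finset.univ := rfl

lemma self_mem_cycleOfF (π : Equiv.Perm (Fin n)) (x : Fin n) : x ∈ cycleOfF π x :=
  mem_cycleOfF.mpr (Equiv.Perm.SameCycle.refl π x)

lemma sameCycle_of_mem {π : Equiv.Perm (Fin n)} {x y z : Fin n}
    (hy : y ∈ cycleOfF π x) (hz : z ∈ cycleOfF π x) : π.SameCycle y z :=
  (mem_cycleOfF.mp hy).symm.trans (mem_cycleOfF.mp hz)

lemma nextIn_mem_cycleOfF {π : Equiv.Perm (Fin n)} {x y : Fin n}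
    (hy : y ∈ cycleOfF π x) (E : Finset (Fin n)) : nextIn π E y ∈ cycleOfF π x :=
  mem_cycleOfF.mpr ((mem_cycleOfF.mp hy).trans (sameCycle_nextIn π E y))

lemma nextIn_inv_mem_cycleOfF {π : Equiv.Perm (Fin n)} {x y : Fin n}
    (hy : y ∈ cycleOfF π x) (E : Finset (Fin n)) : nextIn π⁻¹ E y ∈ cycleOfF π x :=
  mem_cycleOfF.mpr ((mem_cycleOfF.mp hy).trans
    (Equiv.Perm.sameCycle_inv.mp (sameCycle_nextIn π⁻¹ E y)))

lemma nextIn_mem_of_inter {π : Equiv.Perm (Fin n)} {x : Fin n} {E : Finset (Fin n)} {y : Fin n}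
    (hy : y ∈ cycleOfF π x) (hne : (E ∩ cycleOfF π x).Nonempty) :
    nextIn π E y ∈ E ∩ cycleOfF π x := by
  obtain ⟨z, hz⟩ := hne
  rw [Finset.mem_inter] at hz
  exact Finset.mem_inter.mpr
    ⟨nextIn_mem hz.1 (sameCycle_of_mem hy hz.2), nextIn_mem_cycleOfF hy E⟩

lemma nextIn_inv_mem_of_inter {π : Equiv.Perm (Fin n)} {x : Fin n} {E : Finset (Fin n)}
    {y : Fin n} (hy : y ∈ cycleOfF π x) (hne : (E ∩ cycleOfF π x).Nonempty) :
    nextIn π⁻¹ E y ∈ E ∩ cycleOfF π x := by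
  obtain ⟨z, hz⟩ := hne
  rw [Finset.mem_inter] at hz
  exact Finset.mem_inter.mpr
    ⟨nextIn_mem hz.1 (Equiv.Perm.sameCycle_inv.mpr (sameCycle_of_mem hy hz.2)),
      nextIn_inv_mem_cycleOfF hy E⟩

lemma level_inter_card_lt (π : Equiv.Perm (Fin n)) (x : Fin n) (r : ℕ)
    (hne : ((level π 1 r) ∩ cycleOfF π x).Nonempty) :
    ((level π 1 (r+1)) ∩ cycleOfF π x).card < ((level π 1 r) ∩ cycleOfF π x).card := by
  set M := ((level π 1 r) ∩ cycleOfF π x).max' hne with hM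
  have hMmem : M ∈ (level π 1 r) ∩ cycleOfF π x := Finset.max'_mem _ hne
  rw [Finset.mem_inter] at hMmem
  have hMnot : M ∉ level π 1 (r+1) := by
    intro h
    have h2 := (mem_level_succ.mp h).2.1
    have h3 := nextIn_mem_of_inter hMmem.2 hne
    have h4 : nextIn π (level π 1 r) M ≤ M := Finset.le_max' _ _ h3
    exact absurd h2 (not_lt.mpr h4)
  apply Finset.card_lt_card
  constructor
  · exact Finset.inter_subset_inter (level_succ_subset π 1 r) subset_rfl
  · intro hsub
    exact hMnot (Finset.mem_inter.mp (hsub (Finset.mem_inter.mpr hMmem))).1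

lemma exists_level_inter_empty (π : Equiv.Perm (Fin n)) (x : Fin n) :
    ∃ r, level π 1 r ∩ cycleOfF π x = ∅ := by
  by_contra hc
  push_neg at hc
  have hne : ∀ r, ((level π 1 r) ∩ cycleOfF π x).Nonempty :=
    fun r => hc r
  have key : ∀ r, ((level π 1 r) ∩ cycleOfF π x).card + r ≤
      ((level π 1 0) ∩ cycleOfF π x).card := by
    intro r
    induction r with
    | zero => simp
    | succ r ih =>
      have := level_inter_card_lt π x r (hne r)
      omega
  have := key (((level π 1 0) ∩ cycleOfF π x).card + 1)
  omega

noncomputable def topN (π : Equiv.Perm (Fin n)) (x : Fin n) : ℕ :=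
  Nat.find (exists_level_inter_empty π x) - 1

lemma find_pos (π : Equiv.Perm (Fin n)) (x : Fin n) :
    0 < Nat.find (exists_level_inter_empty π x) := by
  rcases Nat.eq_zero_or_pos (Nat.find (exists_level_inter_empty π x)) with h | h
  · exfalso
    have := Nat.find_spec (exists_level_inter_empty π x)
    rw [h, level_zero, Finset.univ_inter] at this
    exact absurd (self_mem_cycleOfF π x) (this ▸ Finset.notMem_empty x)
  · exact h

lemma level_inter_nonempty (π : Equiv.Perm (Fin n)) (x : Fin n) {r : ℕ} (h : r ≤ topN π x) :
    ((level π 1 r) ∩ cycleOfF π x).Nonempty := by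
  have h0 := find_pos π x
  have hlt : r < Nat.find (exists_level_inter_empty π x) := by
    unfold topN at h; omega
  exact Finset.nonempty_iff_ne_empty.mpr (Nat.find_min (exists_level_inter_empty π x) hlt)

lemma level_inter_empty (π : Equiv.Perm (Fin n)) (x : Fin n) {r : ℕ} (h : topN π x < r) :
    level π 1 r ∩ cycleOfF π x = ∅ := by
  have h0 := find_pos π x
  have hge : Nat.find (exists_level_inter_empty π x) ≤ r := by
    unfold topN at h; omega
  have hsub : level π 1 r ∩ cycleOfF π x ⊆
      level π 1 (Nat.find (exists_level_inter_empty π x)) ∩ cycleOfF π x :=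
    Finset.inter_subset_inter (level_mono π 1 hge) subset_rfl
  rw [Nat.find_spec (exists_level_inter_empty π x)] at hsub
  exact Finset.subset_empty.mp hsub

noncomputable def minC (π : Equiv.Perm (Fin n)) (x : Fin n) : Fin n :=
  (cycleOfF π x).min' ⟨x, self_mem_cycleOfF π x⟩

lemma minC_mem (π : Equiv.Perm (Fin n)) (x : Fin n) : minC π x ∈ cycleOfF π x :=
  Finset.min'_mem _ _

lemma minC_le {π : Equiv.Perm (Fin n)} {x y : Fin n} (hy : y ∈ cycleOfF π x) :
    minC π x ≤ y := Finset.min'_le _ _ hy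

lemma minC_mem_level_succ (π : Equiv.Perm (Fin n)) (x : Fin n) {r : ℕ}
    (hm : minC π x ∈ level π 1 r) {w : Fin n} (hw : w ∈ level π 1 r ∩ cycleOfF π x)
    (hwm : w ≠ minC π x) : minC π x ∈ level π 1 (r+1) := by
  rw [Finset.mem_inter] at hw
  have hne : ((level π 1 r) ∩ cycleOfF π x).Nonempty :=
    ⟨w, Finset.mem_inter.mpr hw⟩
  have hmc : minC π x ∈ cycleOfF π x := minC_mem π x
  rw [mem_level_succ]
  refine ⟨hm, ?_, ?_⟩
  · have hfin := nextIn_mem_of_inter hmc hne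
    rw [Finset.mem_inter] at hfin
    have hfne : nextIn π (level π 1 r) (minC π x) ≠ minC π x := by
      intro he
      exact hwm (eq_of_nextIn_eq_self he hw.1 (sameCycle_of_mem hmc hw.2))
    exact lt_of_le_of_ne (minC_le hfin.2) (Ne.symm hfne)
  · have hfin := nextIn_inv_mem_of_inter hmc hne
    rw [Finset.mem_inter] at hfin
    have hfne : nextIn π⁻¹ (level π 1 r) (minC π x) ≠ minC π x := by
      intro he
      exact hwm (eq_of_nextIn_eq_self he hw.1
        (Equiv.Perm.sameCycle_inv.mpr (sameCycle_of_mem hmc hw.2)))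
    exact lt_of_le_of_ne (minC_le hfin.2) (Ne.symm hfne)

lemma minC_mem_level (π : Equiv.Perm (Fin n)) (x : Fin n) :
    ∀ r ≤ topN π x, minC π x ∈ level π 1 r := by
  intro r
  induction r with
  | zero => intro _; rw [level_zero]; exact Finset.mem_univ _
  | succ r ih =>
    intro hr
    have hm := ih (by omega)
    obtain ⟨w, hw⟩ := level_inter_nonempty π x hr
    by_cases hwm : w = minC π x
    · subst hwm
      exact (Finset.mem_inter.mp hw).1
    · have hw' : w ∈ level π 1 r ∩ cycleOfF π x := by
        rw [Finset.mem_inter] at hw ⊢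
        exact ⟨level_succ_subset π 1 r hw.1, hw.2⟩
      exact minC_mem_level_succ π x hm hw' hwm

lemma level_top_inter (π : Equiv.Perm (Fin n)) (x : Fin n) :
    level π 1 (topN π x) ∩ cycleOfF π x = {minC π x} := by
  apply Finset.Subset.antisymm
  · intro w hw
    rw [Finset.mem_singleton]
    by_contra hwm
    have hm := minC_mem_level π x (topN π x) le_rfl
    have h1 := minC_mem_level_succ π x hm hw hwm
    have h2 : minC π x ∈ level π 1 (topN π x + 1) ∩ cycleOfF π x :=
      Finset.mem_inter.mpr ⟨h1, minC_mem π x⟩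
    rw [level_inter_empty π x (by omega)] at h2
    exact Finset.notMem_empty _ h2
  · intro w hw
    rw [Finset.mem_singleton] at hw
    subst hw
    exact Finset.mem_inter.mpr ⟨minC_mem_level π x _ le_rfl, minC_mem π x⟩

lemma nextIn_top_minC (π : Equiv.Perm (Fin n)) (x : Fin n) :
    nextIn π (level π 1 (topN π x)) (minC π x) = minC π x := by
  have hne : ((level π 1 (topN π x)) ∩ cycleOfF π x).Nonempty :=
    level_inter_nonempty π x le_rfl
  have h := nextIn_mem_of_inter (minC_mem π x) hne
  rw [level_top_inter π x, Finset.mem_singleton] at h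
  exact h

lemma iSeq_mem_cycleOfF {π : Equiv.Perm (Fin n)} {x i : Fin n} (hi : i ∈ cycleOfF π x) :
    ∀ k, iSeq π 1 i k ∈ cycleOfF π x := by
  intro k
  induction k with
  | zero => exact hi
  | succ k ih =>
    rw [iSeq_succ]
    exact nextIn_mem_cycleOfF ih _

lemma jSeq_mem_cycleOfF {π : Equiv.Perm (Fin n)} {x m : Fin n} (hm : m ∈ cycleOfF π x)
    (r : ℕ) : ∀ q, jSeq π 1 r m q ∈ cycleOfF π x := by
  intro q
  induction q with
  | zero => exact hm
  | succ q ih =>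
    rw [jSeq_succ]
    exact nextIn_mem_cycleOfF ih _

lemma jSeq_mem_level {π : Equiv.Perm (Fin n)} {x m : Fin n} (hm : m ∈ cycleOfF π x)
    {r q : ℕ} (hq : 1 ≤ q) (hrq : r - q ≤ topN π x) :
    jSeq π 1 r m q ∈ level π 1 (r - q) := by
  obtain ⟨q', rfl⟩ : ∃ q', q = q' + 1 := ⟨q - 1, by omega⟩
  rw [jSeq_succ]
  have hne := level_inter_nonempty π x hrq
  exact (Finset.mem_inter.mp
    (nextIn_mem_of_inter (jSeq_mem_cycleOfF hm r q') hne)).1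

lemma best_iff {π : Equiv.Perm (Fin n)} {x i : Fin n} (hi : i ∈ cycleOfF π x) :
    (∃ r, IsBest1 π r i) ↔ ∀ k ≤ topN π x, iSeq π 1 i k ∈ level π 1 k := by
  constructor
  · rintro ⟨r, hstair, hnp⟩
    have hasc : ∀ k ≤ r, iSeq π 1 i k ∈ level π 1 k := fun k hk => (hstair k hk).1
    have hrT : r ≤ topN π x := by
      by_contra hgt
      have h1 : iSeq π 1 i r ∈ level π 1 r ∩ cycleOfF π x :=
        Finset.mem_inter.mpr ⟨hasc r le_rfl, iSeq_mem_cycleOfF hi r⟩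
      rw [level_inter_empty π x (by omega)] at h1
      exact Finset.notMem_empty _ h1
    have halmost : IsAlmost π 1 (r + 1) i := by
      refine ⟨fun k hk => hasc k (by omega), fun q hq1 hq2 => ?_⟩
      exact jSeq_mem_level (iSeq_mem_cycleOfF hi (r + 1)) hq1 (by omega)
    have heq : iSeq π 1 i r = iSeq π 1 i (r + 1) := by
      by_contra hne
      exact hnp ⟨halmost, hne⟩
    have hfix : nextIn π (level π 1 r) (iSeq π 1 i r) = iSeq π 1 i r := by
      rw [← iSeq_succ, ← heq]
    have hTr : topN π x ≤ r := by
      by_contra hlt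
      obtain ⟨w, hw⟩ := level_inter_nonempty π x (by omega : r + 1 ≤ topN π x)
      rw [Finset.mem_inter] at hw
      have hwr : w ∈ level π 1 r := level_succ_subset π 1 r hw.1
      have hwe : w = iSeq π 1 i r :=
        eq_of_nextIn_eq_self hfix hwr (sameCycle_of_mem (iSeq_mem_cycleOfF hi r) hw.2)
      subst hwe
      have := (mem_level_succ.mp hw.1).2.1
      rw [hfix] at this
      exact lt_irrefl _ this
    intro k hk
    exact hasc k (by omega)
  · intro h
    refine ⟨topN π x, ?_, ?_⟩
    · intro k hk
      refine ⟨h k hk, ?_⟩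
      rcases Nat.eq_zero_or_pos k with rfl | hk0
      · rw [jSeq_zero, Nat.sub_zero]
        exact h _ le_rfl
      · exact jSeq_mem_level (iSeq_mem_cycleOfF hi _) hk0 (by omega)
    · rintro ⟨_, hne⟩
      apply hne
      have hiT : iSeq π 1 i (topN π x) = minC π x := by
        have h1 : iSeq π 1 i (topN π x) ∈ level π 1 (topN π x) ∩ cycleOfF π x :=
          Finset.mem_inter.mpr ⟨h _ le_rfl, iSeq_mem_cycleOfF hi _⟩
        rw [level_top_inter π x, Finset.mem_singleton] at h1
        exact h1
      rw [iSeq_succ, hiT, nextIn_top_minC π x]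

noncomputable def dSeq (π : Equiv.Perm (Fin n)) (T : ℕ) (m : Fin n) : ℕ → Fin n
  | 0 => m
  | t + 1 => nextIn π⁻¹ (level π 1 (T - (t + 1))) (dSeq π T m t)

lemma dSeq_mem_cycleOfF (π : Equiv.Perm (Fin n)) (x : Fin n) (T : ℕ) :
    ∀ t, dSeq π T (minC π x) t ∈ cycleOfF π x := by
  intro t
  induction t with
  | zero => exact minC_mem π x
  | succ t ih =>
    rw [dSeq]
    exact nextIn_inv_mem_cycleOfF ih _

lemma dSeq_mem_level (π : Equiv.Perm (Fin n)) (x : Fin n) :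
    ∀ t, dSeq π (topN π x) (minC π x) t ∈ level π 1 (topN π x - t) := by
  intro t
  induction t with
  | zero =>
    rw [Nat.sub_zero]
    exact minC_mem_level π x _ le_rfl
  | succ t _ =>
    rw [dSeq]
    have hne := level_inter_nonempty π x (Nat.sub_le (topN π x) (t + 1))
    exact (Finset.mem_inter.mp
      (nextIn_inv_mem_of_inter (dSeq_mem_cycleOfF π x _ t) hne)).1

lemma iSeq_dSeq (π : Equiv.Perm (Fin n)) (x : Fin n) :
    ∀ k ≤ topN π x,
      iSeq π 1 (dSeq π (topN π x) (minC π x) (topN π x)) k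
        = dSeq π (topN π x) (minC π x) (topN π x - k) := by
  intro k
  induction k with
  | zero => intro _; rw [Nat.sub_zero, iSeq_zero]
  | succ k ih =>
    intro hk
    have hTk : topN π x - k = (topN π x - (k + 1)) + 1 := by omega
    have hlv : topN π x - (topN π x - (k + 1) + 1) = k := by omega
    have hz : dSeq π (topN π x) (minC π x) (topN π x - (k + 1)) ∈ level π 1 k := by
      have := dSeq_mem_level π x (topN π x - (k + 1))
      have he : topN π x - (topN π x - (k + 1)) = k + 1 := by omega
      rw [he] at this
      exact level_succ_subset π 1 k this
    rw [iSeq_succ, ih (by omega), hTk, dSeq, hlv]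
    have h2 := nextIn_inv_nextIn (σ := π⁻¹) (E := level π 1 k) hz
    rw [inv_inv] at h2
    exact h2

lemma unique_aux (π : Equiv.Perm (Fin n)) (x : Fin n) {i i' : Fin n}
    (hi : i ∈ cycleOfF π x) (hi' : i' ∈ cycleOfF π x)
    (h : ∀ k ≤ topN π x, iSeq π 1 i k ∈ level π 1 k)
    (h' : ∀ k ≤ topN π x, iSeq π 1 i' k ∈ level π 1 k) : i = i' := by
  have claim : ∀ t ≤ topN π x, iSeq π 1 i (topN π x - t) = iSeq π 1 i' (topN π x - t) := by
    intro t
    induction t with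
    | zero =>
      intro _
      rw [Nat.sub_zero]
      have h1 : iSeq π 1 i (topN π x) ∈ level π 1 (topN π x) ∩ cycleOfF π x :=
        Finset.mem_inter.mpr ⟨h _ le_rfl, iSeq_mem_cycleOfF hi _⟩
      have h2 : iSeq π 1 i' (topN π x) ∈ level π 1 (topN π x) ∩ cycleOfF π x :=
        Finset.mem_inter.mpr ⟨h' _ le_rfl, iSeq_mem_cycleOfF hi' _⟩
      rw [level_top_inter π x, Finset.mem_singleton] at h1 h2
      rw [h1, h2]
    | succ t ih =>
      intro ht
      have hk : topN π x - t = (topN π x - (t + 1)) + 1 := by omega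
      set k := topN π x - (t + 1) with hkdef
      have hIH := ih (by omega)
      rw [hk] at hIH
      have e1 : iSeq π 1 i (k + 1) = nextIn π (level π 1 k) (iSeq π 1 i k) := iSeq_succ π i k
      have e2 : iSeq π 1 i' (k + 1) = nextIn π (level π 1 k) (iSeq π 1 i' k) := iSeq_succ π i' k
      have m1 : iSeq π 1 i k ∈ level π 1 k := h k (by omega)
      have m2 : iSeq π 1 i' k ∈ level π 1 k := h' k (by omega)
      have n1 := nextIn_inv_nextIn (σ := π) (E := level π 1 k) m1
      have n2 := nextIn_inv_nextIn (σ := π) (E := level π 1 k) m2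
      rw [← e1] at n1
      rw [← e2] at n2
      rw [← n1, ← n2, hIH]
  have := claim (topN π x) le_rfl
  rwa [Nat.sub_self, iSeq_zero, iSeq_zero] at this

/-- (Fich et al., `b = 1`.)  For every cycle `C` of `π` there is exactly one
element `i ∈ C` from which a best staircase exists. -/
theorem exists_unique_best_staircase (n : ℕ) (π : Equiv.Perm (Fin n))
    (x : Fin n) (C : Finset (Fin n)) (hC : C = cycleOfF π x) :
    ∃! i : Fin n, i ∈ C ∧ ∃ r, IsBest1 π r i := by
  subst hC
  refine ⟨dSeq π (topN π x) (minC π x) (topN π x), ⟨?_, ?_⟩, ?_⟩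
  · exact dSeq_mem_cycleOfF π x (topN π x) (topN π x)
  · rw [best_iff (dSeq_mem_cycleOfF π x (topN π x) (topN π x))]
    intro k hk
    rw [iSeq_dSeq π x k hk]
    have := dSeq_mem_level π x (topN π x - k)
    have he : topN π x - (topN π x - k) = k := by omega
    rwa [he] at this
  · rintro y ⟨hyC, hyB⟩
    apply unique_aux π x hyC (dSeq_mem_cycleOfF π x (topN π x) (topN π x))
    · exact (best_iff hyC).mp hyB
    · intro k hk
      rw [iSeq_dSeq π x k hk]
      have := dSeq_mem_level π x (topN π x - k)
      have he : topN π x - (topN π x - k) = k := by omega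
      rwa [he] at this
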